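/- Almost amalgamation: let A and B be normed spaces, X a linear subspace of A, ε ≥ 0, and φ : X → B a linear map with (1−ε)‖x‖ ≤ ‖φ(x)‖ ≤ (1+ε)‖x‖ for all x ∈ X. Then there exist a normed space V and linear isometric embeddings h_A : A → V and h_B : B → V such that ‖h_A(x) − h_B(φ(x))‖ ≤ ε‖x‖ for all x ∈ X. -/

import Mathlib

universe u

private def Amalg (A B : Type u) : Type u := A × B

/-- Almost amalgamation: let `A`, `B` be normed spaces over `𝕜`
(`ℝ` or `ℂ`), `X` a linear subspace of `A`, `ε ≥ 0`, and `φ : X → B` linear with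
`(1−ε)‖x‖ ≤ ‖φ(x)‖ ≤ (1+ε)‖x‖` on `X`. Then there are a normed space `V` and
linear isometric embeddings `h_A : A → V`, `h_B : B → V` with
`‖h_A x − h_B (φ x)‖ ≤ ε ‖x‖` for all `x ∈ X`. -/
theorem almost_amalgamation {𝕜 : Type} [RCLike 𝕜] {A B : Type u}
    [NormedAddCommGroup A] [NormedSpace 𝕜 A] [NormedAddCommGroup B] [NormedSpace 𝕜 B]
    (X : Submodule 𝕜 A) (ε : ℝ) (hε : 0 ≤ ε) (φ : X →ₗ[𝕜] B)
    (hlow : ∀ x : X, (1 - ε) * ‖x‖ ≤ ‖φ x‖)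
    (hup : ∀ x : X, ‖φ x‖ ≤ (1 + ε) * ‖x‖) :
    ∃ (V : Type u) (_ : NormedAddCommGroup V) (_ : NormedSpace 𝕜 V)
      (hA : A →ₗᵢ[𝕜] V) (hB : B →ₗᵢ[𝕜] V),
      ∀ x : X, ‖hA ↑x - hB (φ x)‖ ≤ ε * ‖x‖ := by
  classical
  haveI : Nonempty X := ⟨0⟩
  set f : A × B → X → ℝ := fun v x => ‖v.1 - (x : A)‖ + ‖v.2 + φ x‖ + ε * ‖x‖ with hfdef
  have fnn : ∀ v x, 0 ≤ f v x := fun v x => by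
    have := norm_nonneg (v.1 - (x : A)); have := norm_nonneg (v.2 + φ x)
    have := mul_nonneg hε (norm_nonneg x); simp only [hfdef]; linarith
  have bdd : ∀ v, BddBelow (Set.range (f v)) := fun v =>
    ⟨0, by rintro _ ⟨x, rfl⟩; exact fnn v x⟩
  set p : A × B → ℝ := fun v => ⨅ x : X, f v x with hpdef
  have pnn : ∀ v, 0 ≤ p v := fun v => Real.iInf_nonneg (fnn v)
  have p_le : ∀ v x, p v ≤ f v x := fun v x => ciInf_le (bdd v) x
  -- triangle inequality
  have p_add : ∀ v w, p (v + w) ≤ p v + p w := by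
    intro v w
    refine le_ciInf_add_ciInf fun x y => ?_
    refine (p_le (v + w) (x + y)).trans ?_
    have h1 : ‖(v + w).1 - ((x + y : X) : A)‖ ≤ ‖v.1 - (x : A)‖ + ‖w.1 - (y : A)‖ := by
      have he : (v + w).1 - ((x + y : X) : A) = (v.1 - (x : A)) + (w.1 - (y : A)) := by
        simp only [Prod.fst_add, Submodule.coe_add]; abel
      rw [he]; exact norm_add_le _ _
    have h2 : ‖(v + w).2 + φ (x + y)‖ ≤ ‖v.2 + φ x‖ + ‖w.2 + φ y‖ := by
      have he : (v + w).2 + φ (x + y) = (v.2 + φ x) + (w.2 + φ y) := by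
        simp only [Prod.snd_add, map_add]; abel
      rw [he]; exact norm_add_le _ _
    have h3 : ε * ‖x + y‖ ≤ ε * ‖x‖ + ε * ‖y‖ := by
      have := norm_add_le x y; nlinarith
    simp only [hfdef]; linarith
  -- homogeneity
  have p_smul_le : ∀ (c : 𝕜) v, p (c • v) ≤ ‖c‖ * p v := by
    intro c v
    rw [hpdef, Real.mul_iInf_of_nonneg (norm_nonneg c)]
    refine le_ciInf fun x => (p_le (c • v) (c • x)).trans_eq ?_
    simp only [hfdef, Prod.smul_fst, Prod.smul_snd, map_smul, Submodule.coe_smul]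
    rw [← smul_sub, ← smul_add, norm_smul, norm_smul, norm_smul]
    ring
  have p_smul : ∀ (c : 𝕜) v, p (c • v) = ‖c‖ * p v := by
    intro c v
    rcases eq_or_ne c 0 with rfl | hc
    · simp only [zero_smul, norm_zero, zero_mul]
      refine le_antisymm ?_ (pnn 0)
      refine (p_le 0 0).trans_eq ?_
      simp [hfdef]
    · refine le_antisymm (p_smul_le c v) ?_
      have := p_smul_le c⁻¹ (c • v)
      rw [inv_smul_smul₀ hc, norm_inv] at this
      have hcn : 0 < ‖c‖ := norm_pos_iff.mpr hc
      rw [← mul_le_mul_iff_right₀ hcn] at this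
      calc ‖c‖ * p v ≤ ‖c‖ * (‖c‖⁻¹ * p (c • v)) := this
        _ = p (c • v) := by field_simp
  -- key norm identities
  have pA : ∀ a : A, p (a, 0) = ‖a‖ := by
    intro a
    refine le_antisymm ((p_le (a, 0) 0).trans_eq (by simp [hfdef])) ?_
    refine le_ciInf fun x => ?_
    have h1 : ‖a‖ ≤ ‖a - (x : A)‖ + ‖(x : A)‖ := by
      have := norm_add_le (a - (x : A)) (x : A); simpa using this
    have h2 : (1 - ε) * ‖x‖ ≤ ‖φ x‖ := hlow x
    have h3 : ‖(x : A)‖ = ‖x‖ := rfl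
    simp only [hfdef, zero_add]
    nlinarith [norm_nonneg (φ x)]
  have pB : ∀ b : B, p (0, b) = ‖b‖ := by
    intro b
    refine le_antisymm ((p_le (0, b) 0).trans_eq (by simp [hfdef])) ?_
    refine le_ciInf fun x => ?_
    have h1 : ‖b‖ ≤ ‖b + φ x‖ + ‖φ x‖ := by
      have := norm_sub_le (b + φ x) (φ x); simpa using this
    have h2 : ‖φ x‖ ≤ (1 + ε) * ‖x‖ := hup x
    have h3 : ‖(0 : A) - (x : A)‖ = ‖x‖ := by
      rw [zero_sub, norm_neg]; rfl
    simp only [hfdef]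
    nlinarith
  have pX : ∀ x : X, p ((x : A), -φ x) ≤ ε * ‖x‖ := fun x =>
    (p_le ((x : A), -φ x) x).trans_eq (by simp [hfdef])
  -- build the seminormed space structure on the type synonym
  letI : AddCommGroup (Amalg A B) := inferInstanceAs (AddCommGroup (A × B))
  letI : Module 𝕜 (Amalg A B) := inferInstanceAs (Module 𝕜 (A × B))
  let q : AddGroupSeminorm (Amalg A B) :=
    { toFun := fun v => p v
      map_zero' := by
        refine le_antisymm ((p_le 0 0).trans_eq (by simp [hfdef])) (pnn 0)
      add_le' := fun v w => p_add v w
      neg' := fun v => by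
        have := p_smul (-1 : 𝕜) v
        rw [norm_neg, norm_one, one_mul, neg_one_smul 𝕜 (show A × B from v)] at this
        exact this }
  letI : SeminormedAddCommGroup (Amalg A B) := q.toSeminormedAddCommGroup
  letI : NormedSpace 𝕜 (Amalg A B) :=
    ⟨fun c v => le_of_eq (p_smul c v)⟩
  let toAmalg : (A × B) →ₗ[𝕜] Amalg A B :=
    { toFun := fun v => v, map_add' := fun _ _ => rfl, map_smul' := fun _ _ => rfl }
  let mkL : Amalg A B →ₗ[𝕜] SeparationQuotient (Amalg A B) :=
    (SeparationQuotient.mkCLM 𝕜 (Amalg A B)).toLinearMap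
  refine ⟨SeparationQuotient (Amalg A B), inferInstance, inferInstance,
    ⟨mkL ∘ₗ toAmalg ∘ₗ LinearMap.inl 𝕜 A B, fun a => ?_⟩,
    ⟨mkL ∘ₗ toAmalg ∘ₗ LinearMap.inr 𝕜 A B, fun b => ?_⟩, fun x => ?_⟩
  · show ‖SeparationQuotient.mk (toAmalg (a, 0))‖ = ‖a‖
    rw [SeparationQuotient.norm_mk]
    exact pA a
  · show ‖SeparationQuotient.mk (toAmalg (0, b))‖ = ‖b‖
    rw [SeparationQuotient.norm_mk]
    exact pB b
  · show ‖mkL (toAmalg ((x : A), 0)) - mkL (toAmalg (0, φ x))‖ ≤ ε * ‖x‖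
    rw [← map_sub mkL, ← map_sub toAmalg]
    show ‖SeparationQuotient.mk (toAmalg (((x : A), 0) - (0, φ x)))‖ ≤ ε * ‖x‖
    rw [SeparationQuotient.norm_mk]
    have he : (((x : A), 0) - (0, φ x) : A × B) = ((x : A), -φ x) := by
      simp [Prod.ext_iff]
    rw [he]
    exact pX x
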